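/- arXiv:1211.2977 — 3 statements merged into one kernel-verified Lean document; each statement's English description precedes it below -/
import Mathlib

section
/- If f : ℂ \ {0} → ℂ is holomorphic on the punctured unit disk and has an essential singularity at 0 (i.e. the limit of f(x) as x → 0 does not exist in the Riemann sphere), then limsup_{r → 0} diam f(sphere 0 r) > 0, where diam is taken with respect to the spherical metric. -/
open Filter Topology Set

/-- The chordal (spherical) distance between two finite points of the Riemann sphere. -/
noncomputable def chordalDist (z w : ℂ) : ℝ :=
  2 * dist z w / (Real.sqrt (1 + ‖z‖ ^ 2) * Real.sqrt (1 + ‖w‖ ^ 2))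

/-- Diameter of a set of complex numbers with respect to the chordal metric. -/
noncomputable def sphericalDiam (S : Set ℂ) : ℝ :=
  sSup (Set.image2 chordalDist S S)

lemma sqrtfac_pos (z : ℂ) : 0 < Real.sqrt (1 + ‖z‖ ^ 2) :=
  Real.sqrt_pos.2 (by positivity)

lemma sqrtfac_le (z : ℂ) : Real.sqrt (1 + ‖z‖ ^ 2) ≤ 1 + ‖z‖ := by
  rw [show (1 : ℝ) + ‖z‖ = Real.sqrt ((1 + ‖z‖) ^ 2) by
    rw [Real.sqrt_sq (by positivity)]]
  exact Real.sqrt_le_sqrt (by nlinarith [norm_nonneg z])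

lemma dist_le_sqrtfac_mul (z w : ℂ) :
    dist z w ≤ Real.sqrt (1 + ‖z‖ ^ 2) * Real.sqrt (1 + ‖w‖ ^ 2) := by
  have h1 : dist z w ≤ ‖z‖ + ‖w‖ := by
    simpa [dist_eq_norm] using norm_sub_le z w
  refine h1.trans ?_
  rw [← Real.sqrt_mul (by positivity)]
  rw [show ‖z‖ + ‖w‖ = Real.sqrt ((‖z‖ + ‖w‖) ^ 2) by
    rw [Real.sqrt_sq (by positivity)]]
  exact Real.sqrt_le_sqrt (by nlinarith [sq_nonneg (1 - ‖z‖ * ‖w‖)])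

lemma chordalDist_nonneg (z w : ℂ) : 0 ≤ chordalDist z w := by
  unfold chordalDist; positivity

lemma chordalDist_le_two (z w : ℂ) : chordalDist z w ≤ 2 := by
  unfold chordalDist
  rw [div_le_iff₀ (by positivity)]
  nlinarith [dist_le_sqrtfac_mul z w]

lemma chordal_lower (z w : ℂ) :
    2 * dist z w / ((1 + ‖z‖) * (1 + ‖w‖)) ≤ chordalDist z w := by
  unfold chordalDist
  gcongr
  · exact sqrtfac_le z
  · exact sqrtfac_le w

lemma euclid_of_chordal {B ε : ℝ} (hB : 0 ≤ B) (hε : 0 < ε) {z w : ℂ}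
    (hw : ‖w‖ ≤ B) (h : chordalDist z w < 2 * ε / ((1 + B + ε) * (1 + B))) :
    ‖z - w‖ ≤ ε := by
  by_contra hd
  push_neg at hd
  have hdist : dist z w = ‖z - w‖ := dist_eq_norm z w
  set d := ‖z - w‖ with hdd
  have hd0 : 0 < d := hε.trans hd
  have hz : ‖z‖ ≤ B + d := by
    calc ‖z‖ = ‖z - w + w‖ := by ring_nf
    _ ≤ ‖z - w‖ + ‖w‖ := norm_add_le _ _
    _ ≤ B + d := by rw [← hdd]; linarith
  have h1 : 2 * d / ((1 + (B + d)) * (1 + B)) ≤ 2 * d / ((1 + ‖z‖) * (1 + ‖w‖)) := by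
    gcongr
  have h2 : 2 * ε / ((1 + B + ε) * (1 + B)) ≤ 2 * d / ((1 + (B + d)) * (1 + B)) := by
    rw [div_le_div_iff₀ (by positivity) (by positivity)]
    nlinarith [mul_nonneg (mul_nonneg (by linarith : (0:ℝ) ≤ 1 + B) (by linarith : (0:ℝ) ≤ 1 + B)) (by linarith : (0:ℝ) ≤ d - ε)]
  have h3 := chordal_lower z w
  rw [hdist] at h3
  linarith

lemma sphericalDiam_le_two (S : Set ℂ) : sphericalDiam S ≤ 2 := by
  apply Real.sSup_le _ (by norm_num)
  rintro x ⟨a, -, b, -, rfl⟩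
  exact chordalDist_le_two a b

lemma bddAbove_image2 (S : Set ℂ) : BddAbove (Set.image2 chordalDist S S) := by
  refine ⟨2, ?_⟩
  rintro x ⟨a, -, b, -, rfl⟩
  exact chordalDist_le_two a b

lemma chordalDist_le_sphericalDiam {S : Set ℂ} {a b : ℂ} (ha : a ∈ S) (hb : b ∈ S) :
    chordalDist a b ≤ sphericalDiam S :=
  le_csSup (bddAbove_image2 S) (Set.mem_image2_of_mem ha hb)

theorem limsup_spherical_diam_pos_of_essential_singularity
    (f : ℂ → ℂ)
    (hf : DifferentiableOn ℂ f (Metric.ball (0 : ℂ) 1 \ {0}))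
    (hess : ¬ ∃ L : OnePoint ℂ,
      Tendsto (fun z => ((f z : ℂ) : OnePoint ℂ)) (𝓝[Metric.ball (0 : ℂ) 1 \ {0}] 0) (𝓝 L)) :
    0 < Filter.limsup (fun r : ℝ => sphericalDiam (f '' Metric.sphere (0 : ℂ) r)) (𝓝[>] (0 : ℝ)) := by
  set Sf : Set ℂ := Metric.ball (0 : ℂ) 1 \ {0} with hSfdef
  set l : Filter ℂ := 𝓝[Sf] (0 : ℂ) with hldef
  by_contra hpos
  push_neg at hpos
  have hbdd : IsBoundedUnder (· ≤ ·) (𝓝[>] (0:ℝ))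
      (fun r => sphericalDiam (f '' Metric.sphere (0:ℂ) r)) :=
    Filter.isBoundedUnder_of ⟨2, fun r => sphericalDiam_le_two _⟩
  have hsmall : ∀ δ : ℝ, 0 < δ →
      ∀ᶠ r in 𝓝[>] (0:ℝ), sphericalDiam (f '' Metric.sphere (0:ℂ) r) < δ := fun δ hδ =>
    Filter.eventually_lt_of_limsup_lt (lt_of_le_of_lt hpos hδ) hbdd
  by_cases hinf : Tendsto (fun z => ‖f z‖) l atTop
  · apply hess
    have h1 : Tendsto f l (cocompact ℂ) := by
      rw [← Metric.cobounded_eq_cocompact, ← comap_norm_atTop, tendsto_comap_iff]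
      exact hinf
    refine ⟨(OnePoint.infty : OnePoint ℂ), ?_⟩
    rw [OnePoint.nhds_infty_eq]
    refine Tendsto.mono_right ?_ le_sup_left
    exact (Filter.tendsto_map.comp h1).mono_right
      (Filter.map_mono cocompact_le_coclosedCompact)
  · rw [tendsto_atTop] at hinf
    push_neg at hinf
    obtain ⟨C, hC⟩ := hinf
    obtain ⟨u, hul, huC⟩ := Filter.exists_seq_forall_of_frequently hC
    have hmemC : ∀ n, f (u n) ∈ Metric.closedBall (0:ℂ) C := fun n => by
      rw [Metric.mem_closedBall, dist_zero_right]
      exact (huC n).le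
    obtain ⟨L, -, φ, hφ, hfv⟩ :=
      (isCompact_closedBall (0:ℂ) C).tendsto_subseq hmemC
    set v : ℕ → ℂ := u ∘ φ with hvdef
    have hvl : Tendsto v atTop l := hul.comp hφ.tendsto_atTop
    rw [tendsto_nhdsWithin_iff] at hvl
    obtain ⟨hv0, hvS⟩ := hvl
    have hvl' : Tendsto v atTop l := by
      rw [tendsto_nhdsWithin_iff]; exact ⟨hv0, hvS⟩
    have hnorm : Tendsto (fun n => ‖v n‖) atTop (𝓝[>] (0:ℝ)) := by
      rw [tendsto_nhdsWithin_iff]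
      constructor
      · simpa using hv0.norm
      · filter_upwards [hvS] with n hn
        exact mem_Ioi.2 (norm_pos_iff.2 (fun h => hn.2 (by simp [h])))
    -- main claim
    have hT : Tendsto f l (𝓝 L) := by
      rw [Metric.tendsto_nhds]
      intro ε hε
      set e : ℝ := min ε 1 with hedef
      have he : 0 < e := lt_min hε one_pos
      have he1 : e ≤ 1 := min_le_right _ _
      have heε : e ≤ ε := min_le_left _ _
      set B : ℝ := ‖L‖ + 1 with hBdef
      set ε2 : ℝ := e / 2 with hε2def
      have hε2 : 0 < ε2 := by positivity
      set δ : ℝ := 2 * (ε2/2) / ((1 + B + ε2/2) * (1 + B)) with hδdef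
      have hB0 : (0:ℝ) ≤ B := by positivity
      have hδ : 0 < δ := by
        have : (0:ℝ) < 1 + B := by linarith
        positivity
      have hev : ∀ᶠ n in atTop, v n ∈ Sf ∧ ‖f (v n) - L‖ ≤ ε2/2 ∧
          sphericalDiam (f '' Metric.sphere (0:ℂ) ‖v n‖) < δ := by
        have h1 : ∀ᶠ n in atTop, ‖f (v n) - L‖ ≤ ε2/2 := by
          have := hfv.eventually (Metric.closedBall_mem_nhds L (by positivity : (0:ℝ) < ε2/2))
          filter_upwards [this] with n hn
          simpa [dist_eq_norm, hvdef] using hn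
        filter_upwards [hvS, h1, hnorm.eventually (hsmall δ hδ)] with n h1' h2' h3'
        exact ⟨h1', h2', h3'⟩
      rw [eventually_atTop] at hev
      obtain ⟨n₀, hn₀⟩ := hev
      -- circle bound
      have hcirc : ∀ n, n₀ ≤ n → ∀ w : ℂ, ‖w‖ = ‖v n‖ → ‖f w - L‖ ≤ ε2 := by
        intro n hn w hw
        obtain ⟨hvS', hfL, hdiam⟩ := hn₀ n hn
        have h1 : chordalDist (f w) (f (v n)) ≤
            sphericalDiam (f '' Metric.sphere (0:ℂ) ‖v n‖) :=
          chordalDist_le_sphericalDiam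
            (mem_image_of_mem f (by rwa [mem_sphere_zero_iff_norm]))
            (mem_image_of_mem f (by rw [mem_sphere_zero_iff_norm]))
        have hB' : ‖f (v n)‖ ≤ B := by
          have : ‖f (v n)‖ ≤ ‖f (v n) - L‖ + ‖L‖ := by
            simpa using norm_add_le (f (v n) - L) L
          have hle : ε2/2 ≤ 1 := by rw [hε2def]; linarith
          rw [hBdef]; linarith
        have h2 := euclid_of_chordal hB0 (by positivity : (0:ℝ) < ε2/2) hB'
          (h1.trans_lt hdiam)
        calc ‖f w - L‖ = ‖(f w - f (v n)) + (f (v n) - L)‖ := by ring_nf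
        _ ≤ ‖f w - f (v n)‖ + ‖f (v n) - L‖ := norm_add_le _ _
        _ ≤ ε2/2 + ε2/2 := add_le_add h2 hfL
        _ = ε2 := by ring
      set rN : ℝ := ‖v n₀‖ with hrNdef
      obtain ⟨hvSN, -, -⟩ := hn₀ n₀ le_rfl
      have hrN0 : 0 < rN := norm_pos_iff.2 (fun h => hvSN.2 (by simp [h]))
      have hrN1 : rN < 1 := by
        have := hvSN.1
        rwa [Metric.mem_ball, dist_zero_right] at this
      have hmain : ∀ z ∈ Sf, ‖z‖ < rN → ‖f z - L‖ ≤ ε2 := by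
        intro z hz hzr
        have hz0 : 0 < ‖z‖ := norm_pos_iff.2 (fun h => hz.2 (by simp [h]))
        obtain ⟨m, hmlt, hm⟩ :
            ∃ m, ‖v m‖ < ‖z‖ ∧ n₀ ≤ m := by
          have h1 : ∀ᶠ n in atTop, ‖v n‖ < ‖z‖ :=
            ((hnorm.mono_right nhdsWithin_le_nhds).eventually_lt_const hz0)
          exact (h1.and (eventually_ge_atTop n₀)).exists
        set rB : ℝ := ‖v m‖ with hrBdef
        obtain ⟨hvSm, -, -⟩ := hn₀ m hm
        have hrB0 : 0 < rB := norm_pos_iff.2 (fun h => hvSm.2 (by simp [h]))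
        set U : Set ℂ := Metric.ball (0:ℂ) rN \ Metric.closedBall 0 rB with hUdef
        have hUopen : IsOpen U := Metric.isOpen_ball.sdiff Metric.isClosed_closedBall
        set A : Set ℂ := Metric.closedBall (0:ℂ) rN \ Metric.ball 0 rB with hAdef
        have hAclosed : IsClosed A := Metric.isClosed_closedBall.sdiff Metric.isOpen_ball
        have hUA : U ⊆ A := fun w hw =>
          ⟨Metric.ball_subset_closedBall hw.1, fun h => hw.2 (Metric.ball_subset_closedBall h)⟩
        have hclU : closure U ⊆ A := hAclosed.closure_subset_iff.2 hUA
        have hASf : A ⊆ Sf := by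
          intro w hw
          obtain ⟨hw1, hw2⟩ := hw
          rw [Metric.mem_closedBall, dist_zero_right] at hw1
          rw [Metric.mem_ball, dist_zero_right] at hw2
          push_neg at hw2
          constructor
          · rw [Metric.mem_ball, dist_zero_right]; linarith
          · intro h
            rw [mem_singleton_iff] at h
            rw [h] at hw2
            simp at hw2
            linarith
        have hdiff : DiffContOnCl ℂ (fun w => f w - L) U :=
          DifferentiableOn.diffContOnCl
            (((hf.sub_const L)).mono (hclU.trans hASf))
        have hfr : ∀ w ∈ frontier U, ‖f w - L‖ ≤ ε2 := by
          intro w hw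
          have hwA : w ∈ A := hclU (frontier_subset_closure hw)
          have hwnU : w ∉ U := by
            rw [hUopen.frontier_eq] at hw
            exact hw.2
          obtain ⟨hw1, hw2⟩ := hwA
          rw [Metric.mem_closedBall, dist_zero_right] at hw1
          rw [Metric.mem_ball, dist_zero_right] at hw2
          push_neg at hw2
          rcases eq_or_lt_of_le hw1 with heq | hlt
          · exact hcirc n₀ le_rfl w heq
          · refine hcirc m hm w ?_
            by_contra hne
            apply hwnU
            constructor
            · rw [Metric.mem_ball, dist_zero_right]; exact hlt
            · rw [Metric.mem_closedBall, dist_zero_right]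
              intro hle
              exact hne (le_antisymm hle hw2)
        have hzU : z ∈ U := by
          constructor
          · rw [Metric.mem_ball, dist_zero_right]; exact hzr
          · rw [Metric.mem_closedBall, dist_zero_right]
            exact not_le.2 hmlt
        exact Complex.norm_le_of_forall_mem_frontier_norm_le
          (Metric.isBounded_ball.subset diff_subset) hdiff hfr (subset_closure hzU)
      have hball : ∀ᶠ z in l, ‖z‖ < rN := by
        have hmem : Metric.ball (0:ℂ) rN ∈ 𝓝 (0:ℂ) := Metric.ball_mem_nhds _ hrN0
        filter_upwards [nhdsWithin_le_nhds hmem] with z hz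
        rwa [Metric.mem_ball, dist_zero_right] at hz
      filter_upwards [hball, self_mem_nhdsWithin] with z h1 h2
      rw [dist_eq_norm]
      calc ‖f z - L‖ ≤ ε2 := hmain z h2 h1
      _ < ε := by rw [hε2def]; linarith
    exact hess ⟨(L : OnePoint ℂ), (OnePoint.continuous_coe.tendsto L).comp hT⟩
end

section
/- (Hurwitz-type image inclusion, strong form) Let U ⊂ ℂ be open and connected, let f_k : U → ℂ be holomorphic with f_k → g locally uniformly on U, and suppose g is non-constant. Then for every w ∈ g(U) there exists k such that w ∈ f_k(U); in particular g(U) ⊆ ⋃_k f_k(U). -/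
open Filter Topology Set

theorem hurwitz_image_subset_union
    (U : Set ℂ) (hU : IsOpen U) (hUc : IsConnected U)
    (f : ℕ → ℂ → ℂ) (g : ℂ → ℂ)
    (hf : ∀ k, DifferentiableOn ℂ (f k) U)
    (hconv : TendstoLocallyUniformlyOn f g atTop U)
    (hg : ∃ x ∈ U, ∃ y ∈ U, g x ≠ g y) :
    ∀ w ∈ g '' U, ∃ k, w ∈ f k '' U := by
  rintro w ⟨z₀, hz₀, rfl⟩
  -- g is holomorphic on U
  have hgd : DifferentiableOn ℂ g U :=
    hconv.differentiableOn (Eventually.of_forall hf) hU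
  have hga : AnalyticOnNhd ℂ g U := hgd.analyticOnNhd hU
  -- g - g z₀ has isolated zeros: eventually ≠ on punctured nhds
  have hne : ∀ᶠ z in 𝓝[≠] z₀, g z ≠ g z₀ := by
    rcases (hga z₀ hz₀).eventually_eq_or_eventually_ne (analyticAt_const (v := g z₀)) with h | h
    · exfalso
      obtain ⟨x, hx, y, hy, hxy⟩ := hg
      have := hga.eqOn_of_preconnected_of_eventuallyEq
        (analyticOnNhd_const (v := g z₀)) hUc.isPreconnected hz₀ h
      exact hxy ((this hx).trans (this hy).symm)
    · exact h
  -- choose a small closed ball around z₀ inside U with g ≠ g z₀ on the sphere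
  rw [eventually_nhdsWithin_iff] at hne
  obtain ⟨r₁, hr₁, hball₁⟩ := Metric.eventually_nhds_iff_ball.mp hne
  obtain ⟨r₂, hr₂, hball₂⟩ := Metric.isOpen_iff.mp hU z₀ hz₀
  set r : ℝ := min r₁ r₂ / 2 with hrdef
  have hrpos : 0 < r := by positivity
  have hsub : Metric.closedBall z₀ r ⊆ U := fun z hz => hball₂ <| by
    have : r < r₂ := by
      have := min_le_right r₁ r₂
      simp only [hrdef]; linarith
    exact lt_of_le_of_lt (Metric.mem_closedBall.mp hz) this
  have hsphere : ∀ z ∈ Metric.sphere z₀ r, g z ≠ g z₀ := by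
    intro z hz
    have hzr : dist z z₀ = r := Metric.mem_sphere.mp hz
    have h1 : z ∈ Metric.ball z₀ r₁ := by
      rw [Metric.mem_ball, hzr, hrdef]
      have := min_le_left r₁ r₂; linarith
    have h2 : z ≠ z₀ := by
      intro h; rw [h, dist_self] at hzr; linarith
    exact hball₁ z h1 h2
  -- minimum of ‖g - g z₀‖ on the sphere
  have hcompS : IsCompact (Metric.sphere z₀ r) := isCompact_sphere z₀ r
  have hnesphere : (Metric.sphere z₀ r).Nonempty :=
    NormedSpace.sphere_nonempty.mpr hrpos.le
  have hcont : ContinuousOn (fun z => ‖g z - g z₀‖) (Metric.sphere z₀ r) := by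
    apply ContinuousOn.norm
    exact ((hgd.continuousOn.mono (Metric.sphere_subset_closedBall.trans hsub)).sub
      continuousOn_const)
  obtain ⟨z₁, hz₁, hz₁min⟩ := hcompS.exists_isMinOn hnesphere hcont
  set ε : ℝ := ‖g z₁ - g z₀‖ with hεdef
  have hεpos : 0 < ε := by
    rw [hεdef, norm_pos_iff, sub_ne_zero]
    exact hsphere z₁ hz₁
  -- uniform convergence on the closed ball
  have hUC : TendstoUniformlyOn f g atTop (Metric.closedBall z₀ r) :=
    (tendstoLocallyUniformlyOn_iff_tendstoUniformlyOn_of_compact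
      (isCompact_closedBall z₀ r)).mp (hconv.mono hsub)
  have hUC' := (Metric.tendstoUniformlyOn_iff.mp hUC) (ε / 2) (by positivity)
  obtain ⟨k, hk⟩ := hUC'.exists
  refine ⟨k, ?_⟩
  by_contra hw
  have hfk : ∀ z ∈ U, f k z ≠ g z₀ := by
    intro z hz h
    exact hw ⟨z, hz, h⟩
  -- apply max modulus to (f k · - g z₀)⁻¹ on the ball
  set F : ℂ → ℂ := fun z => (f k z - g z₀)⁻¹ with hFdef
  have hFd : DifferentiableOn ℂ F U := by
    apply DifferentiableOn.inv ((hf k).sub (differentiableOn_const _))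
    intro z hz
    exact sub_ne_zero.mpr (hfk z hz)
  have hclosure : closure (Metric.ball z₀ r) = Metric.closedBall z₀ r :=
    closure_ball z₀ hrpos.ne'
  have hdcc : DiffContOnCl ℂ F (Metric.ball z₀ r) := by
    apply DifferentiableOn.diffContOnCl
    rw [hclosure]
    exact hFd.mono hsub
  have hfrontier : frontier (Metric.ball z₀ r) = Metric.sphere z₀ r :=
    frontier_ball z₀ hrpos.ne'
  have hboundF : ∀ z ∈ frontier (Metric.ball z₀ r), ‖F z‖ ≤ (ε / 2)⁻¹ := by
    intro z hz
    rw [hfrontier] at hz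
    have hzc : z ∈ Metric.closedBall z₀ r := Metric.sphere_subset_closedBall hz
    have h1 : ε ≤ ‖g z - g z₀‖ := hz₁min hz
    have h2 : dist (g z) (f k z) < ε / 2 := hk z hzc
    have h3 : ε / 2 ≤ ‖f k z - g z₀‖ := by
      rw [dist_eq_norm] at h2
      have h4 := norm_sub_sub_norm_sub_le_norm_sub (g z) (f k z) (g z₀)
      linarith
    rw [hFdef]
    simp only [norm_inv]
    exact inv_anti₀ (by positivity) h3
  have hz₀cl : z₀ ∈ closure (Metric.ball z₀ r) := by
    rw [hclosure]; exact Metric.mem_closedBall_self hrpos.le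
  have hmax := Complex.norm_le_of_forall_mem_frontier_norm_le
    Metric.isBounded_ball hdcc hboundF hz₀cl
  -- but ‖F z₀‖ > (ε/2)⁻¹ since f k z₀ is close to g z₀
  have hclose : dist (g z₀) (f k z₀) < ε / 2 := hk z₀ (Metric.mem_closedBall_self hrpos.le)
  have hne0 : f k z₀ - g z₀ ≠ 0 := sub_ne_zero.mpr (hfk z₀ hz₀)
  have : ‖f k z₀ - g z₀‖ < ε / 2 := by
    rw [dist_eq_norm] at hclose
    calc ‖f k z₀ - g z₀‖ = ‖g z₀ - f k z₀‖ := by rw [norm_sub_rev]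
    _ < ε / 2 := hclose
  have hFbig : (ε / 2)⁻¹ < ‖F z₀‖ := by
    rw [hFdef]
    simp only [norm_inv]
    apply inv_strictAnti₀ (norm_pos_iff.mpr hne0) this
  linarith
end

section
/- Let f : B \ {0} → M be continuous (B the open unit ball in ℝⁿ, n ≥ 2, M a metric space), and suppose diam f(sphere(0,r)) < R/2 for all r ∈ (0, r₀). If f(sphere(0,r₁)) ⊆ B(a, R) for some r₁ < r₀ and some a ∈ M, and there exists a sequence w_j → 0 with d(f(w_j), a) > 4R eventually, then there exists r₂ ∈ (0, r₁) such that f(sphere(0,r₂)) meets the metric sphere {y : d(y,a) = 2R} and f(sphere(0,r₂)) ⊆ B(c, R/2) for some c with d(c,a) = 2R. -/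
open Filter Topology Set Metric

theorem exists_touching_sphere_radius
    (n : ℕ) (hn : 2 ≤ n) (M : Type*) [MetricSpace M]
    (f : EuclideanSpace ℝ (Fin n) → M)
    (hf : ContinuousOn f (Metric.ball (0 : EuclideanSpace ℝ (Fin n)) 1 \ {0}))
    (R r₀ : ℝ) (hR : 0 < R) (hr₀ : 0 < r₀) (hr₀1 : r₀ ≤ 1)
    (hdiam : ∀ r ∈ Set.Ioo (0 : ℝ) r₀,
      Metric.diam (f '' Metric.sphere (0 : EuclideanSpace ℝ (Fin n)) r) < R / 2)
    (a : M) (r₁ : ℝ) (hr₁ : r₁ ∈ Set.Ioo (0 : ℝ) r₀)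
    (hin : f '' Metric.sphere (0 : EuclideanSpace ℝ (Fin n)) r₁ ⊆ Metric.ball a R)
    (w : ℕ → EuclideanSpace ℝ (Fin n))
    (hwmem : ∀ j, w j ∈ Metric.ball (0 : EuclideanSpace ℝ (Fin n)) 1 \ {0})
    (hw0 : Tendsto w atTop (𝓝 (0 : EuclideanSpace ℝ (Fin n))))
    (hwfar : ∀ᶠ j in atTop, 4 * R < dist (f (w j)) a) :
    ∃ r₂ ∈ Set.Ioo (0 : ℝ) r₁, ∃ c : M, dist c a = 2 * R ∧
      c ∈ f '' Metric.sphere (0 : EuclideanSpace ℝ (Fin n)) r₂ ∧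
      f '' Metric.sphere (0 : EuclideanSpace ℝ (Fin n)) r₂ ⊆ Metric.ball c (R / 2) := by
  have hne : Nonempty (Fin n) := ⟨⟨0, by omega⟩⟩
  set e : EuclideanSpace ℝ (Fin n) := EuclideanSpace.single (Classical.arbitrary (Fin n)) (1 : ℝ)
    with he
  have hnorme : ‖e‖ = 1 := by
    rw [he, EuclideanSpace.norm_single]; simp
  have hnorm_smul : ∀ r : ℝ, 0 ≤ r → ‖r • e‖ = r := by
    intro r hr
    rw [norm_smul, hnorme, Real.norm_eq_abs, abs_of_nonneg hr, mul_one]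
  -- spheres of radius r ∈ (0,1) sit inside ball 1 \ {0}
  have hsub : ∀ r : ℝ, 0 < r → r < 1 →
      Metric.sphere (0 : EuclideanSpace ℝ (Fin n)) r ⊆
        Metric.ball (0 : EuclideanSpace ℝ (Fin n)) 1 \ {0} := by
    intro r h0 h1 x hx
    rw [mem_sphere_zero_iff_norm] at hx
    constructor
    · rw [mem_ball_zero_iff, hx]; exact h1
    · simp only [Set.mem_singleton_iff]
      intro h; rw [h, norm_zero] at hx; exact h0.ne hx
  have hr₁1 : r₁ < 1 := lt_of_lt_of_le hr₁.2 hr₀1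
  -- compactness/boundedness of sphere images
  have hbdd : ∀ r : ℝ, 0 < r → r < 1 →
      Bornology.IsBounded (f '' Metric.sphere (0 : EuclideanSpace ℝ (Fin n)) r) := by
    intro r h0 h1
    exact ((isCompact_sphere _ _).image_of_continuousOn (hf.mono (hsub r h0 h1))).isBounded
  -- pick j with w j close to 0 and f (w j) far
  have hsmall : ∀ᶠ j in atTop, ‖w j‖ < r₁ := by
    have h := hw0.norm
    simp only [norm_zero] at h
    exact h.eventually_lt_const hr₁.1
  obtain ⟨j, hjfar, hjsmall⟩ := (hwfar.and hsmall).exists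
  set ρ := ‖w j‖ with hρ
  have hρ0 : 0 < ρ := by
    have := (hwmem j).2
    simp only [Set.mem_singleton_iff] at this
    exact norm_pos_iff.mpr this
  have hρ1 : ρ < r₁ := hjsmall
  have hρr₀ : ρ < r₀ := hρ1.trans hr₁.2
  -- φ r = dist (f (r • e)) a
  set φ : ℝ → ℝ := fun r => dist (f (r • e)) a with hφ
  have hmaps : ∀ r ∈ Set.Icc ρ r₁, r • e ∈
      Metric.ball (0 : EuclideanSpace ℝ (Fin n)) 1 \ {0} := by
    intro r hr
    have h0 : 0 < r := hρ0.trans_le hr.1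
    have h1 : r < 1 := lt_of_le_of_lt hr.2 hr₁1
    apply hsub r h0 h1
    rw [mem_sphere_zero_iff_norm]
    exact hnorm_smul r h0.le
  have hφcont : ContinuousOn φ (Set.Icc ρ r₁) := by
    have h1 : ContinuousOn (fun r : ℝ => f (r • e)) (Set.Icc ρ r₁) :=
      hf.comp ((continuous_id.smul continuous_const).continuousOn) hmaps
    exact continuous_dist.comp_continuousOn (h1.prodMk continuousOn_const)
  have hsmul_mem : ∀ r : ℝ, 0 < r → r • e ∈ Metric.sphere (0 : EuclideanSpace ℝ (Fin n)) r := by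
    intro r h0
    rw [mem_sphere_zero_iff_norm]
    exact hnorm_smul r h0.le
  -- φ ρ > 2R
  have hφρ : 2 * R < φ ρ := by
    have hwmemρ : w j ∈ Metric.sphere (0 : EuclideanSpace ℝ (Fin n)) ρ := by
      rw [mem_sphere_zero_iff_norm]
    have hd : dist (f (ρ • e)) (f (w j)) ≤
        Metric.diam (f '' Metric.sphere (0 : EuclideanSpace ℝ (Fin n)) ρ) :=
      Metric.dist_le_diam_of_mem (hbdd ρ hρ0 (hρ1.trans hr₁1))
        (Set.mem_image_of_mem f (hsmul_mem ρ hρ0)) (Set.mem_image_of_mem f hwmemρ)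
    have hdi := hdiam ρ ⟨hρ0, hρr₀⟩
    have htri : dist (f (w j)) a ≤ dist (f (w j)) (f (ρ • e)) + dist (f (ρ • e)) a :=
      dist_triangle _ _ _
    rw [dist_comm (f (w j)) (f (ρ • e))] at htri
    have : 4 * R < dist (f (ρ • e)) (f (w j)) + φ ρ := lt_of_lt_of_le hjfar htri
    linarith
  -- φ r₁ < 2R
  have hφr₁ : φ r₁ < 2 * R := by
    have : f (r₁ • e) ∈ Metric.ball a R :=
      hin (Set.mem_image_of_mem f (hsmul_mem r₁ hr₁.1))
    rw [Metric.mem_ball] at this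
    simp only [hφ]
    linarith
  -- IVT
  have hivt := intermediate_value_Icc' hρ1.le hφcont
  have h2R : (2 * R) ∈ Set.Icc (φ r₁) (φ ρ) := ⟨hφr₁.le, hφρ.le⟩
  obtain ⟨r₂, hr₂mem, hr₂eq⟩ := hivt h2R
  have hr₂0 : 0 < r₂ := hρ0.trans_le hr₂mem.1
  have hr₂lt : r₂ < r₁ := lt_of_le_of_ne hr₂mem.2 (by
    intro h; rw [h] at hr₂eq; exact hφr₁.ne hr₂eq)
  have hr₂r₀ : r₂ < r₀ := hr₂lt.trans hr₁.2
  refine ⟨r₂, ⟨hr₂0, hr₂lt⟩, f (r₂ • e), hr₂eq, Set.mem_image_of_mem f (hsmul_mem r₂ hr₂0), ?_⟩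
  rintro y ⟨x, hx, rfl⟩
  rw [Metric.mem_ball]
  calc dist (f x) (f (r₂ • e)) ≤
      Metric.diam (f '' Metric.sphere (0 : EuclideanSpace ℝ (Fin n)) r₂) :=
        Metric.dist_le_diam_of_mem (hbdd r₂ hr₂0 (hr₂lt.trans hr₁1))
          (Set.mem_image_of_mem f hx) (Set.mem_image_of_mem f (hsmul_mem r₂ hr₂0))
    _ < R / 2 := hdiam r₂ ⟨hr₂0, hr₂r₀⟩
end
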